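/- The Galvin–Prikry theorem: for every Borel set P ⊆ [ω]^ω (Borel with respect to the usual topology inherited from 2^ω), there exists an infinite H ⊆ ℕ such that either [H]^ω ⊆ P or [H]^ω ⊆ [ω]^ω \ P. -/
import Mathlib


/-- `[ω]^ω` as a subspace of Cantor space `2^ω` via characteristic functions. -/
def InfCantor : Type := {f : ℕ → Bool // {n | f n = true}.Infinite}

instance : TopologicalSpace InfCantor :=
  instTopologicalSpaceSubtype

instance : MeasurableSpace InfCantor := borel InfCantor

instance : BorelSpace InfCantor := ⟨rfl⟩

/-- `[H]^ω`: the members of `[ω]^ω` all of whose elements lie in `H`. -/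
def cube (H : Set ℕ) : Set InfCantor := {f | ∀ n, f.1 n = true → n ∈ H}

namespace GP
open Set

/-- the elements of `B` above every element of `t` -/
def restr (t : Finset ℕ) (B : Set ℕ) : Set ℕ := {b ∈ B | ∀ a ∈ t, a < b}

/-- the Ellentuck cube `[t, B]` (with `B` implicitly restricted above `t`). -/
def Cube (s : Finset ℕ) (B : Set ℕ) : Set (Set ℕ) :=
  {X | X.Infinite ∧ ↑s ⊆ X ∧ X ⊆ ↑s ∪ restr s B}

/-- `u` is an initial segment of `X`. -/
def initSeg (u : Finset ℕ) (X : Set ℕ) : Prop :=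
  ↑u ⊆ X ∧ ∀ b ∈ X, b ∉ u → ∀ a ∈ u, a < b

lemma restr_subset (t : Finset ℕ) (B : Set ℕ) : restr t B ⊆ B := fun _ h => h.1

lemma restr_mono {t : Finset ℕ} {B B' : Set ℕ} (h : B ⊆ B') : restr t B ⊆ restr t B' :=
  fun b hb => ⟨h hb.1, hb.2⟩

lemma restr_anti {t t' : Finset ℕ} (h : t' ⊆ t) (B : Set ℕ) : restr t B ⊆ restr t' B :=
  fun b hb => ⟨hb.1, fun a ha => hb.2 a (h ha)⟩

lemma restr_idem (t : Finset ℕ) (B : Set ℕ) : restr t (restr t B) = restr t B := by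
  ext b; exact ⟨fun h => h.1, fun h => ⟨h, h.2⟩⟩

lemma restr_infinite {B : Set ℕ} (hB : B.Infinite) (t : Finset ℕ) : (restr t B).Infinite := by
  apply ((hB.diff (Set.finite_Iic (t.sup id))).mono _)
  rintro b ⟨hbB, hb⟩
  refine ⟨hbB, fun a ha => ?_⟩
  simp only [Set.mem_Iic, not_le] at hb
  exact lt_of_le_of_lt (Finset.le_sup (f := id) ha) hb

lemma Cube_mono {s : Finset ℕ} {B B' : Set ℕ} (h : B ⊆ B') : Cube s B ⊆ Cube s B' :=
  fun X hX => ⟨hX.1, hX.2.1, hX.2.2.trans (Set.union_subset_union_right _ (restr_mono h))⟩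

lemma Cube_restr (s : Finset ℕ) (B : Set ℕ) : Cube s (restr s B) = Cube s B := by
  unfold Cube; rw [restr_idem]

/-- change of stem: if `u` is an initial segment of `X ∈ [s,B]` extending `s` then `X ∈ [u,B]`. -/
lemma Cube_stem {s u : Finset ℕ} {B X : Set ℕ} (hX : X ∈ Cube s B) (hsu : (s : Set ℕ) ⊆ (u : Set ℕ))
    (hu : initSeg u X) : X ∈ Cube u B := by
  refine ⟨hX.1, hu.1, fun x hx => ?_⟩
  by_cases hxu : x ∈ u
  · exact Or.inl hxu
  · have hx' : x ∈ ↑s ∪ restr s B := hX.2.2 hx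
    have hgt : ∀ a ∈ u, a < x := hu.2 x hx hxu
    rcases hx' with h | h
    · exact absurd (hsu h) hxu
    · exact Or.inr ⟨h.1, hgt⟩

section Fusion

variable (s : Finset ℕ) (A : Set ℕ) (Φ : Finset ℕ → Set ℕ → Prop)

/-- simultaneous shrinking for finitely many stems -/
lemma multiShrink
    (mono : ∀ t C C', Φ t C → C' ⊆ C → C'.Infinite → Φ t C')
    (shrink : ∀ t B, ↑t ⊆ ↑s ∪ A → B ⊆ A → B.Infinite → ∃ C, C ⊆ B ∧ C.Infinite ∧ Φ t C)
    (ts : Finset (Finset ℕ)) :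
    ∀ B, (∀ t ∈ ts, (t : Set ℕ) ⊆ ↑s ∪ A) → B ⊆ A → B.Infinite →
      ∃ C, C ⊆ B ∧ C.Infinite ∧ ∀ t ∈ ts, Φ t C := by
  classical
  induction ts using Finset.induction_on with
  | empty => exact fun B _ hBA hB => ⟨B, subset_rfl, hB, by simp⟩
  | @insert t ts ht ih =>
    intro B hts hBA hB
    obtain ⟨C, hCB, hC, hCts⟩ := ih B (fun u hu => hts u (Finset.mem_insert_of_mem hu)) hBA hB
    obtain ⟨D, hDC, hD, hDt⟩ := shrink t C (hts t (Finset.mem_insert_self _ _)) (hCB.trans hBA) hC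
    refine ⟨D, hDC.trans hCB, hD, fun u hu => ?_⟩
    rcases Finset.mem_insert.mp hu with rfl | hu
    · exact hDt
    · exact mono u C D (hCts u hu) hDC hD

structure St : Type where
  F : Finset ℕ
  cur : Set ℕ
  hFA : (F : Set ℕ) ⊆ A
  hcur : cur ⊆ A
  hinf : cur.Infinite
  hgtF : ∀ b ∈ cur, ∀ a ∈ F, a < b
  hgts : ∀ b ∈ cur, ∀ a ∈ s, a < b
  hdec : ∀ t : Finset ℕ, (t : Set ℕ) ⊆ ↑s ∪ ↑F → Φ t cur

variable {s A Φ}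
variable (mono : ∀ t C C', Φ t C → C' ⊆ C → C'.Infinite → Φ t C')
  (shrink : ∀ t B, ↑t ⊆ ↑s ∪ A → B ⊆ A → B.Infinite → ∃ C, C ⊆ B ∧ C.Infinite ∧ Φ t C)

include mono shrink in
lemma step_ex (st : St s A Φ) :
    ∃ p : ℕ × St s A Φ, p.1 ∈ st.cur ∧ p.2.F = insert p.1 st.F ∧ p.2.cur ⊆ st.cur ∧
      ∀ x ∈ p.2.cur, p.1 < x := by
  classical
  obtain ⟨b, hb⟩ := st.hinf.nonempty
  set ts := (s ∪ st.F ∪ {b}).powerset with hts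
  have hall : ∀ t ∈ ts, (t : Set ℕ) ⊆ ↑s ∪ A := by
    intro t hmem
    have h1 : t ⊆ s ∪ st.F ∪ {b} := Finset.mem_powerset.mp hmem
    intro x hx
    have := h1 hx
    simp only [Finset.mem_union, Finset.mem_singleton] at this
    rcases this with (h | h) | h
    · exact Or.inl h
    · exact Or.inr (st.hFA h)
    · exact Or.inr (st.hcur (h ▸ hb))
  obtain ⟨C, hCB, hC, hCts⟩ := multiShrink s A Φ mono shrink ts st.cur hall st.hcur st.hinf
  set C' : Set ℕ := C \ Set.Iic b with hC'
  have hC'C : C' ⊆ C := Set.diff_subset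
  have hC'inf : C'.Infinite := hC.diff (Set.finite_Iic b)
  have hgtb : ∀ x ∈ C', b < x := by
    intro x hx
    have := hx.2
    simpa using this
  refine ⟨⟨b, ⟨insert b st.F, C', ?_, ?_, hC'inf, ?_, ?_, ?_⟩⟩, hb, rfl, hC'C.trans hCB, hgtb⟩
  · intro x hx
    simp only [Finset.coe_insert, Set.mem_insert_iff] at hx
    rcases hx with rfl | hx
    · exact st.hcur hb
    · exact st.hFA hx
  · exact (hC'C.trans hCB).trans st.hcur
  · intro x hx a ha
    rcases Finset.mem_insert.mp ha with rfl | ha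
    · exact hgtb x hx
    · exact st.hgtF x (hCB (hC'C hx)) a ha
  · intro x hx a ha
    exact st.hgts x (hCB (hC'C hx)) a ha
  · intro t hsub
    have htts : t ∈ ts := by
      rw [hts, Finset.mem_powerset]
      intro x hx
      have := hsub hx
      simp only [Set.mem_union, Finset.coe_insert, Set.mem_insert_iff, Finset.mem_coe] at this
      simp only [Finset.mem_union, Finset.mem_singleton]
      tauto
    exact mono t C C' (hCts t htts) hC'C hC'inf

include mono shrink in
/-- The generic fusion lemma. -/
lemma fusion (hA : A.Infinite) :
    ∃ B, B ⊆ restr s A ∧ B.Infinite ∧ ∀ t : Finset ℕ, (t : Set ℕ) ⊆ ↑s ∪ B → Φ t (restr t B) := by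
  classical
  -- initial state
  obtain ⟨C0, hC0A, hC0inf, hC0⟩ := multiShrink s A Φ mono shrink s.powerset (restr s A)
    (fun t ht => (Finset.coe_subset.mpr (Finset.mem_powerset.mp ht)).trans Set.subset_union_left)
    (restr_subset s A) (restr_infinite hA s)
  have hgts0 : ∀ b ∈ C0, ∀ a ∈ s, a < b := fun b hb a ha => (hC0A hb).2 a ha
  have hdec0 : ∀ t : Finset ℕ, (t : Set ℕ) ⊆ ↑s ∪ ((∅ : Finset ℕ) : Set ℕ) → Φ t C0 := by
    intro t hsub
    apply hC0
    rw [Finset.mem_powerset]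
    intro x hx
    have := hsub hx
    simpa using this
  set st0 : St s A Φ := ⟨∅, C0, by simp, hC0A.trans (restr_subset s A), hC0inf, by simp, hgts0,
    hdec0⟩ with hst0
  set next : St s A Φ → ℕ × St s A Φ := fun st => (step_ex mono shrink st).choose with hnext
  have hnextspec : ∀ st : St s A Φ, (next st).1 ∈ st.cur ∧ (next st).2.F = insert (next st).1 st.F ∧
      (next st).2.cur ⊆ st.cur ∧ ∀ x ∈ (next st).2.cur, (next st).1 < x :=
    fun st => (step_ex mono shrink st).choose_spec
  set seq : ℕ → St s A Φ := fun k => Nat.rec st0 (fun _ st => (next st).2) k with hseq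
  set bf : ℕ → ℕ := fun k => (next (seq k)).1 with hbf
  have hseqsucc : ∀ k, seq (k + 1) = (next (seq k)).2 := fun k => rfl
  have hbmem : ∀ k, bf k ∈ (seq k).cur := fun k => (hnextspec (seq k)).1
  have hcurstep : ∀ k, (seq (k+1)).cur ⊆ (seq k).cur := fun k => (hnextspec (seq k)).2.2.1
  have hgt : ∀ k, ∀ x ∈ (seq (k+1)).cur, bf k < x := fun k => (hnextspec (seq k)).2.2.2
  have hcur_anti : ∀ j k, j ≤ k → (seq k).cur ⊆ (seq j).cur := by
    intro j k hjk
    induction k with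
    | zero => simp_all
    | succ n ih =>
      rcases Nat.lt_or_ge j (n+1) with h | h
      · exact (hcurstep n).trans (ih (Nat.lt_succ_iff.mp h))
      · have : j = n + 1 := le_antisymm (by omega) h
        subst this; exact subset_rfl
  have hbmono : StrictMono bf := by
    apply strictMono_nat_of_lt_succ
    intro k
    exact hgt k _ (hbmem (k+1))
  have hF : ∀ k, (seq k).F = (Finset.range k).image bf := by
    intro k
    induction k with
    | zero => rfl
    | succ n ih =>
      have : (seq (n+1)).F = insert (bf n) (seq n).F := (hnextspec (seq n)).2.1
      rw [this, ih, Finset.range_add_one, Finset.image_insert]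
  refine ⟨Set.range bf, ?_, Set.infinite_range_of_injective hbmono.injective, ?_⟩
  · rintro x ⟨k, rfl⟩
    exact hC0A (hcur_anti 0 k (Nat.zero_le k) (hbmem k))
  intro t hsub
  by_cases hcase : ∀ j, bf j ∉ t
  · -- t ⊆ s
    have hts : (t : Set ℕ) ⊆ ↑s := by
      intro x hx
      rcases hsub hx with h | ⟨j, rfl⟩
      · exact h
      · exact absurd hx (hcase j)
    have hΦ : Φ t (seq 0).cur := (seq 0).hdec t (by simpa using hts.trans Set.subset_union_left)
    apply mono t (seq 0).cur _ hΦ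
    · rintro x ⟨⟨k, rfl⟩, -⟩
      exact hcur_anti 0 k (Nat.zero_le k) (hbmem k)
    · exact restr_infinite (Set.infinite_range_of_injective hbmono.injective) t
  · push_neg at hcase
    -- J = indices hitting t
    have hJfin : {j | bf j ∈ t}.Finite := Set.Finite.preimage hbmono.injective.injOn t.finite_toSet
    have hne : hJfin.toFinset.Nonempty := by
      obtain ⟨j0, hj0⟩ := hcase
      exact ⟨j0, by simpa using hj0⟩
    set m := hJfin.toFinset.max' hne with hm
    have hmmem : bf m ∈ t := by
      have := hJfin.toFinset.max'_mem hne
      simpa using this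
    have hmmax : ∀ j, bf j ∈ t → j ≤ m := fun j hj => Finset.le_max' _ j (by simpa using hj)
    have htsub : (t : Set ℕ) ⊆ ↑s ∪ ↑((seq (m+1)).F) := by
      intro x hx
      rcases hsub hx with h | ⟨j, rfl⟩
      · exact Or.inl h
      · refine Or.inr ?_
        rw [hF (m+1)]
        simp only [Finset.coe_image, Finset.coe_range, Set.mem_image, Set.mem_Iio]
        exact ⟨j, Nat.lt_succ_of_le (hmmax j hx), rfl⟩
    have hΦ : Φ t (seq (m+1)).cur := (seq (m+1)).hdec t htsub
    apply mono t (seq (m+1)).cur _ hΦ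
    · rintro x ⟨⟨k, rfl⟩, hxgt⟩
      have : m < k := hbmono.lt_iff_lt.mp (hxgt _ hmmem)
      exact hcur_anti (m+1) k this (hbmem k)
    · exact restr_infinite (Set.infinite_range_of_injective hbmono.injective) t

end Fusion

section Galvin

variable (T : Set (Finset ℕ))

def accepts (t : Finset ℕ) (X : Set ℕ) : Prop := ∀ Y ∈ Cube t X, ∃ u ∈ T, initSeg u Y

def rejects (t : Finset ℕ) (X : Set ℕ) : Prop := ∀ Y, Y ⊆ X → Y.Infinite → ¬ accepts T t Y

variable {T}

lemma accepts_mono {t : Finset ℕ} {X X' : Set ℕ} (h : X' ⊆ X) (ha : accepts T t X) :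
    accepts T t X' := fun Y hY => ha Y (Cube_mono h hY)

lemma rejects_mono {t : Finset ℕ} {X X' : Set ℕ} (h : X' ⊆ X) (hr : rejects T t X) :
    rejects T t X' := fun Y hYX hY => hr Y (hYX.trans h) hY

lemma accepts_restr {t : Finset ℕ} {X : Set ℕ} : accepts T t (restr t X) ↔ accepts T t X := by
  unfold accepts; rw [Cube_restr]

lemma rejects_restr {t : Finset ℕ} {X : Set ℕ} (h : rejects T t (restr t X)) : rejects T t X := by
  intro Y hYX hY hacc
  exact h (restr t Y) (restr_mono hYX) (restr_infinite hY t) (accepts_restr.mpr hacc)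

lemma rejects_of_restr {t : Finset ℕ} {X Y : Set ℕ} (h : rejects T t X) (hYX : restr t Y ⊆ X) :
    rejects T t Y := by
  intro Z hZY hZ hacc
  exact h (restr t Z) ((restr_mono hZY).trans hYX) (restr_infinite hZ t) (accepts_restr.mpr hacc)

lemma initSeg_comparable {u v : Finset ℕ} {X : Set ℕ} (hu : initSeg u X) (hv : initSeg v X) :
    (u : Set ℕ) ⊆ ↑v ∨ (v : Set ℕ) ⊆ ↑u := by
  by_contra h
  push_neg at h
  obtain ⟨h1, h2⟩ := h
  rw [Set.not_subset] at h1 h2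
  obtain ⟨a, ha, hav⟩ := h1
  obtain ⟨b, hb, hbu⟩ := h2
  have h1 : a < b := hu.2 b (hv.1 hb) hbu a ha
  have h2 : b < a := hv.2 a (hu.1 ha) hav b hb
  omega

lemma galvin (T : Set (Finset ℕ)) (s : Finset ℕ) (A : Set ℕ) (hA : A.Infinite) :
    ∃ B, B ⊆ A ∧ B.Infinite ∧
      ((∀ X ∈ Cube s B, ∃ u ∈ T, initSeg u X) ∨
        (∀ X ∈ Cube s B, ∀ u, initSeg u X → u ∉ T)) := by
  classical
  -- Fusion 1: decide all stems
  obtain ⟨D, hDA, hDinf, hdec⟩ := fusion (s := s) (A := A)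
    (Φ := fun t C => accepts T t C ∨ rejects T t C)
    (fun t C C' h hsub hinf => h.imp (accepts_mono hsub) (rejects_mono hsub))
    (fun t B _ _ hB => by
      by_cases hrej : rejects T t B
      · exact ⟨B, subset_rfl, hB, Or.inr hrej⟩
      · unfold rejects at hrej
        push_neg at hrej
        obtain ⟨C, hCB, hC, hacc⟩ := hrej
        exact ⟨C, hCB, hC, Or.inl hacc⟩) hA
  have hDA' : D ⊆ A := hDA.trans (restr_subset s A)
  have hkey : ∀ t : Finset ℕ, (t : Set ℕ) ⊆ ↑s ∪ D →
      accepts T t (restr t D) ∨ rejects T t (restr t D) := hdec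
  by_cases hacc : accepts T s D
  · exact ⟨D, hDA', hDinf, Or.inl hacc⟩
  have hrej : rejects T s D := by
    rcases hkey s Set.subset_union_left with h | h
    · exact absurd (accepts_restr.mp h) hacc
    · exact rejects_restr h
  -- Fusion 2: reject all extensions
  obtain ⟨CC, hCD, hCinf, hΦ2⟩ := fusion (s := s) (A := D)
    (Φ := fun t C => (s : Set ℕ) ⊆ ↑t → (accepts T t C ∨ ∀ n ∈ C, rejects T (t ∪ {n}) C))
    (fun t C C' h hsub hinf hst => by
      rcases h hst with h | h
      · exact Or.inl (accepts_mono hsub h)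
      · exact Or.inr fun n hn => rejects_mono hsub (h n (hsub hn)))
    (fun t B htsD hBD hB => by
      by_cases hst : (s : Set ℕ) ⊆ ↑t
      swap
      · exact ⟨B, subset_rfl, hB, fun h => absurd h hst⟩
      by_cases hex : ∃ C, C ⊆ B ∧ C.Infinite ∧ accepts T t C
      · obtain ⟨C, hCB, hC, hacc⟩ := hex
        exact ⟨C, hCB, hC, fun _ => Or.inl hacc⟩
      · have hrejt : rejects T t B := by
          intro Y hYB hY hacc
          exact hex ⟨Y, hYB, hY, hacc⟩
        set Crej : Set ℕ := {n ∈ restr t B | rejects T (t ∪ {n}) (restr (t ∪ {n}) D)} with hCrej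
        set Cacc : Set ℕ := {n ∈ restr t B | accepts T (t ∪ {n}) (restr (t ∪ {n}) D)} with hCacc
        have hsplit : restr t B ⊆ Crej ∪ Cacc := by
          intro n hn
          have hn' : ((t ∪ {n} : Finset ℕ) : Set ℕ) ⊆ ↑s ∪ D := by
            intro x hx
            simp only [Finset.coe_union, Finset.coe_singleton, Set.mem_union,
              Set.mem_singleton_iff] at hx
            rcases hx with hx | rfl
            · exact htsD hx
            · exact Or.inr (hBD hn.1)
          rcases hkey _ hn' with h | h
          · exact Or.inr ⟨hn, h⟩
          · exact Or.inl ⟨hn, h⟩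
        have hCaccNotInf : ¬ Cacc.Infinite := by
          intro hinf
          apply hrejt Cacc (fun n hn => (restr_subset t B) hn.1) hinf
          -- Cacc accepts t
          intro Y hY
          have hYne : (Y \ ↑t).Nonempty := ((hY.1.diff t.finite_toSet).nonempty).mono subset_rfl
          set n := sInf (Y \ ↑t) with hn
          have hnmem : n ∈ Y \ ↑t := Nat.sInf_mem hYne
          have hnCacc : n ∈ restr t Cacc := by
            rcases hY.2.2 hnmem.1 with h | h
            · exact absurd h (by simpa using hnmem.2)
            · exact h
          have hacc' : accepts T (t ∪ {n}) (restr (t ∪ {n}) D) := hnCacc.1.2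
          apply accepts_restr.mp hacc' Y
          refine ⟨hY.1, ?_, ?_⟩
          · intro x hx
            simp only [Finset.coe_union, Finset.coe_singleton, Set.mem_union,
              Set.mem_singleton_iff] at hx
            rcases hx with hx | rfl
            · exact hY.2.1 hx
            · exact hnmem.1
          · intro x hx
            by_cases hxt : x ∈ ((t ∪ {n} : Finset ℕ) : Set ℕ)
            · exact Or.inl hxt
            · simp only [Finset.coe_union, Finset.coe_singleton, Set.mem_union,
                Set.mem_singleton_iff, not_or] at hxt
              have hxB : x ∈ restr t Cacc := by
                rcases hY.2.2 hx with h | h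
                · exact absurd h hxt.1
                · exact h
              have hxD : x ∈ D := hBD (restr_subset t B hxB.1.1)
              refine Or.inr ⟨hxD, ?_⟩
              intro a ha
              rcases Finset.mem_union.mp ha with ha | ha
              · exact hxB.2 a ha
              · have : a = n := Finset.mem_singleton.mp ha
                subst this
                have : n ≤ x := Nat.sInf_le ⟨hx, hxt.1⟩
                omega
        have hCrejInf : Crej.Infinite := by
          have : (Crej ∪ Cacc).Infinite := (restr_infinite hB t).mono hsplit
          rcases Set.infinite_union.mp this with h | h
          · exact h
          · exact absurd h hCaccNotInf
        refine ⟨Crej, fun n hn => restr_subset t B hn.1, hCrejInf, fun _ => Or.inr ?_⟩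
        intro n hn
        apply rejects_of_restr hn.2
        apply restr_mono
        intro x hx
        exact hBD (restr_subset t B hx.1)) hDinf
  have hCD' : CC ⊆ D := hCD.trans (restr_subset s D)
  -- all stems between s and s ∪ CC are rejected
  have hrejAll : ∀ t : Finset ℕ, (s : Set ℕ) ⊆ ↑t → (t : Set ℕ) ⊆ ↑s ∪ CC →
      rejects T t (restr t CC) := by
    intro t
    induction t using Finset.strongInductionOn with
    | _ t ih =>
    intro hst htsC
    by_cases htriv : t \ s = ∅
    · have hts : t ⊆ s := Finset.sdiff_eq_empty_iff_subset.mp htriv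
      have hst' : s ⊆ t := Finset.coe_subset.mp hst
      have : t = s := le_antisymm hts hst'
      subst this
      exact rejects_mono ((restr_subset t CC).trans hCD') hrej
    · have hne : (t \ s).Nonempty := Finset.nonempty_of_ne_empty htriv
      set m := (t \ s).max' hne with hm
      have hmmem : m ∈ t \ s := (t \ s).max'_mem hne
      have hmt : m ∈ t := (Finset.mem_sdiff.mp hmmem).1
      have hms : m ∉ s := (Finset.mem_sdiff.mp hmmem).2
      set t' := t.erase m with ht'
      have ht't : t' ⊂ t := Finset.erase_ssubset hmt
      have hst'' : (s : Set ℕ) ⊆ ↑t' := by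
        intro a ha
        have hat : a ∈ t := Finset.coe_subset.mp hst (by simpa using ha)
        have : a ≠ m := fun h => hms (h ▸ (by simpa using ha))
        have haa : a ∈ t.erase m := Finset.mem_erase.mpr ⟨this, hat⟩
        show a ∈ ((t.erase m : Finset ℕ) : Set ℕ)
        exact_mod_cast haa
      have ht'sC : (t' : Set ℕ) ⊆ ↑s ∪ CC :=
        fun x hx => htsC (by
          have : x ∈ t' := by simpa using hx
          simpa using Finset.mem_of_mem_erase this)
      have hrej' := ih t' ht't hst'' ht'sC
      have hmCC : m ∈ CC := by
        rcases htsC (by simpa using hmt) with h | h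
        · exact absurd (by simpa using h) hms
        · exact h
      rcases hΦ2 t' ht'sC hst'' with hAc | hR
      · exact absurd hAc (hrej' (restr t' CC) subset_rfl (restr_infinite hCinf t'))
      · have hmC : m ∈ restr t' CC := by
          refine ⟨hmCC, ?_⟩
          intro a ha
          have hat : a ∈ t := Finset.mem_of_mem_erase ha
          have ham : a ≠ m := (Finset.mem_erase.mp ha).1
          by_cases has : a ∈ s
          · exact ((hCD hmCC).2 : ∀ x ∈ s, x < m) a has
          · have : a ∈ t \ s := Finset.mem_sdiff.mpr ⟨hat, has⟩
            have := Finset.le_max' _ a this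
            omega
        have hrt := hR m hmC
        have hteq : t' ∪ {m} = t := by
          rw [ht']
          ext x
          simp only [Finset.mem_union, Finset.mem_erase, Finset.mem_singleton]
          constructor
          · rintro (⟨-, h⟩ | rfl) <;> [exact h; exact hmt]
          · intro hx
            by_cases hxm : x = m
            · exact Or.inr hxm
            · exact Or.inl ⟨hxm, hx⟩
        rw [hteq] at hrt
        exact rejects_mono (restr_anti (Finset.erase_subset m t) CC) hrt
  refine ⟨CC, hCD'.trans hDA', hCinf, Or.inr ?_⟩
  intro X hX u huX huT
  have hsX : initSeg s X := by
    refine ⟨hX.2.1, fun b hb hbs a ha => ?_⟩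
    rcases hX.2.2 hb with h | h
    · exact absurd h hbs
    · exact h.2 a ha
  rcases initSeg_comparable huX hsX with hus | hsu
  · have hrejs := hrejAll s subset_rfl Set.subset_union_left
    apply hrejs (restr s CC) subset_rfl (restr_infinite hCinf s)
    intro Y hY
    refine ⟨u, huT, fun a ha => hY.2.1 (hus ha), ?_⟩
    intro b hb hbu a ha
    by_cases hbs : b ∈ (s : Set ℕ)
    · exact huX.2 b (hX.2.1 hbs) hbu a ha
    · rcases hY.2.2 hb with h | h
      · exact absurd h hbs
      · exact h.2 a (by simpa using hus ha)
  · have huC : (u : Set ℕ) ⊆ ↑s ∪ CC := by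
      intro x hx
      rcases hX.2.2 (huX.1 hx) with h | h
      · exact Or.inl h
      · exact Or.inr (restr_subset _ _ h)
    have hreju := hrejAll u hsu huC
    apply hreju (restr u CC) subset_rfl (restr_infinite hCinf u)
    intro Y hY
    refine ⟨u, huT, hY.2.1, ?_⟩
    intro b hb hbu a ha
    rcases hY.2.2 hb with h | h
    · exact absurd (by simpa using h) hbu
    · exact h.2 a ha

end Galvin

section CR

def memSet (f : InfCantor) : Set ℕ := {n | f.1 n = true}

lemma memSet_infinite (f : InfCantor) : (memSet f).Infinite := f.2

def CubeIC (s : Finset ℕ) (B : Set ℕ) : Set InfCantor := {f | memSet f ∈ Cube s B}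

lemma CubeIC_mono {s : Finset ℕ} {B B' : Set ℕ} (h : B ⊆ B') : CubeIC s B ⊆ CubeIC s B' :=
  fun _ hf => Cube_mono h hf

lemma CubeIC_restr (s : Finset ℕ) (B : Set ℕ) : CubeIC s (restr s B) = CubeIC s B := by
  unfold CubeIC; rw [Cube_restr]

/-- completely Ramsey -/
def CR (P : Set InfCantor) : Prop :=
  ∀ s A, A.Infinite → ∃ B, B ⊆ A ∧ B.Infinite ∧ (CubeIC s B ⊆ P ∨ CubeIC s B ⊆ Pᶜ)

lemma CR_compl {P : Set InfCantor} (h : CR P) : CR Pᶜ := by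
  intro s A hA
  obtain ⟨B, h1, h2, h3⟩ := h s A hA
  refine ⟨B, h1, h2, ?_⟩
  rcases h3 with h3 | h3
  · exact Or.inr (by simpa using h3)
  · exact Or.inl h3

lemma CR_empty : CR (∅ : Set InfCantor) :=
  fun _ A hA => ⟨A, subset_rfl, hA, Or.inr (by simp)⟩

lemma CR_open (U : Set InfCantor) (hU : IsOpen U) : CR U := by
  classical
  have hnbhd : ∀ f : InfCantor, f ∈ U →
      ∃ N, ∀ g : InfCantor, (∀ i < N, g.1 i = f.1 i) → g ∈ U := by
    obtain ⟨V, hV, hVU⟩ := isOpen_induced_iff.mp hU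
    intro f hf
    have hfV : f.1 ∈ V := by rw [← hVU] at hf; exact hf
    obtain ⟨I, w, hw, hpi⟩ := isOpen_pi_iff.mp hV f.1 hfV
    refine ⟨I.sup id + 1, fun g hg => ?_⟩
    have : g.1 ∈ V := by
      apply hpi
      intro i hi
      have : i < I.sup id + 1 := Nat.lt_succ_of_le (Finset.le_sup (f := id) hi)
      rw [hg i this]
      exact (hw i hi).2
    rw [← hVU]
    exact this
  intro s A hA
  set T : Set (Finset ℕ) := {t | (s : Set ℕ) ⊆ ↑t ∧ CubeIC t A ⊆ U} with hT
  obtain ⟨B, hBA, hBinf, hcase⟩ := galvin T s A hA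
  refine ⟨B, hBA, hBinf, ?_⟩
  rcases hcase with hcase | hcase
  · left
    intro f hf
    obtain ⟨u, huT, hu⟩ := hcase (memSet f) hf
    exact huT.2 (Cube_stem (Cube_mono hBA hf) huT.1 hu)
  · right
    intro f hf hfU
    obtain ⟨N, hN⟩ := hnbhd f hfU
    set X := memSet f with hX
    have hXinf : X.Infinite := memSet_infinite f
    obtain ⟨m, hmX, hm⟩ := hXinf.exists_gt (max N (s.sup id))
    set u : Finset ℕ := (Finset.range (m+1)).filter (· ∈ X) with hu
    have humem : ∀ i, i ∈ u ↔ i ≤ m ∧ i ∈ X := by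
      intro i
      simp [hu, Nat.lt_succ_iff]
    have hmu : m ∈ u := (humem m).mpr ⟨le_rfl, hmX⟩
    have hsu : (s : Set ℕ) ⊆ ↑u := by
      intro a ha
      have has : a ∈ s := by simpa using ha
      have haX : a ∈ X := hf.2.1 ha
      have : a ≤ m := le_trans (le_trans (Finset.le_sup (f := id) has) (le_max_right N _)) hm.le
      have : a ∈ u := (humem a).mpr ⟨this, haX⟩
      simpa using this
    have huX : initSeg u X := by
      constructor
      · intro a ha
        have : a ∈ u := by simpa using ha
        exact ((humem a).mp this).2
      · intro b hb hbu a ha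
        have hau : a ∈ u := by simpa using ha
        have ham : a ≤ m := ((humem a).mp hau).1
        have : ¬ (b ≤ m ∧ b ∈ X) := fun hc => hbu ((humem b).mpr hc)
        have hbm : m < b := by
          rcases Nat.lt_or_ge m b with h | h
          · exact h
          · exact absurd ⟨h, hb⟩ this
        omega
    have huT : u ∈ T := by
      refine ⟨hsu, ?_⟩
      intro g hg
      apply hN
      intro i hi
      have him : i ≤ m := le_trans hi.le (le_trans (le_max_left N _) hm.le)
      have hiu : i ∈ u ↔ i ∈ X := by
        rw [humem i]
        exact ⟨fun h => h.2, fun h => ⟨him, h⟩⟩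
      have hgi : g.1 i = true ↔ i ∈ memSet g := Iff.rfl
      have hfi : f.1 i = true ↔ i ∈ X := Iff.rfl
      have hmemg : i ∈ memSet g ↔ i ∈ u := by
        constructor
        · intro h
          rcases hg.2.2 h with h' | h'
          · simpa using h'
          · exfalso
            have := h'.2 m hmu
            omega
        · intro h
          exact hg.2.1 (by simpa using h)
      by_cases hfit : f.1 i = true
      · have : i ∈ u := hiu.mpr (hfi.mp hfit)
        have : g.1 i = true := hgi.mpr (hmemg.mpr this)
        rw [this, hfit]
      · have h1 : i ∉ X := fun h => hfit (hfi.mpr h)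
        have h2 : i ∉ memSet g := fun h => h1 (hiu.mp (hmemg.mp h))
        have hg2 : g.1 i = false := by
          cases hgc : g.1 i
          · rfl
          · exact absurd hgc h2
        have hf2 : f.1 i = false := by
          cases hfc : f.1 i
          · rfl
          · exact absurd hfc hfit
        rw [hg2, hf2]
    exact hcase (memSet f) hf u huX huT

end CR

lemma CR_iUnion (P : ℕ → Set InfCantor) (h : ∀ n, CR (P n)) : CR (⋃ n, P n) := by
  classical
  intro s A hA
  have iter : ∀ (N : ℕ) (t : Finset ℕ) (B : Set ℕ), B.Infinite →
      ∃ C, C ⊆ B ∧ C.Infinite ∧ ∀ k ≤ N, (CubeIC t C ⊆ P k ∨ CubeIC t C ⊆ (P k)ᶜ) := by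
    intro N
    induction N with
    | zero =>
      intro t B hB
      obtain ⟨C, h1, h2, h3⟩ := h 0 t B hB
      exact ⟨C, h1, h2, fun k hk => by rw [Nat.le_zero.mp hk]; exact h3⟩
    | succ N ihN =>
      intro t B hB
      obtain ⟨C, h1, h2, h3⟩ := ihN t B hB
      obtain ⟨C', h1', h2', h3'⟩ := h (N+1) t C h2
      refine ⟨C', h1'.trans h1, h2', fun k hk => ?_⟩
      rcases Nat.lt_succ_iff_lt_or_eq.mp (Nat.lt_succ_of_le hk) with hk' | rfl
      · exact (h3 k (Nat.lt_succ_iff.mp hk')).imp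
          (fun hh => (CubeIC_mono h1').trans hh) (fun hh => (CubeIC_mono h1').trans hh)
      · exact h3'
  obtain ⟨BB, hBA, hBinf, hdec⟩ := fusion (s := s) (A := A)
    (Φ := fun t C => ∀ k ≤ t.sup id, (CubeIC t C ⊆ P k ∨ CubeIC t C ⊆ (P k)ᶜ))
    (fun t C C' hΦ hsub hinf k hk =>
      (hΦ k hk).imp (fun hh => (CubeIC_mono hsub).trans hh) (fun hh => (CubeIC_mono hsub).trans hh))
    (fun t B _ _ hB => iter (t.sup id) t B hB) hA
  have hBA' : BB ⊆ A := hBA.trans (restr_subset s A)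
  have hdec' : ∀ t : Finset ℕ, (t : Set ℕ) ⊆ ↑s ∪ BB → ∀ k ≤ t.sup id,
      (CubeIC t BB ⊆ P k ∨ CubeIC t BB ⊆ (P k)ᶜ) := by
    intro t ht k hk
    have := hdec t ht k hk
    rwa [CubeIC_restr] at this
  set T : Set (Finset ℕ) := {t | (s : Set ℕ) ⊆ ↑t ∧ ∃ n, CubeIC t BB ⊆ P n} with hT
  obtain ⟨C, hCB, hCinf, hcase⟩ := galvin T s BB hBinf
  refine ⟨C, hCB.trans hBA', hCinf, ?_⟩
  rcases hcase with hcase | hcase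
  · left
    intro f hf
    obtain ⟨u, huT, hu⟩ := hcase (memSet f) hf
    obtain ⟨n, hn⟩ := huT.2
    have : f ∈ CubeIC u BB := Cube_stem (Cube_mono hCB hf) huT.1 hu
    exact Set.mem_iUnion.mpr ⟨n, hn this⟩
  · right
    intro f hf hfU
    obtain ⟨n, hfn⟩ := Set.mem_iUnion.mp hfU
    set X := memSet f with hX
    have hXinf : X.Infinite := memSet_infinite f
    obtain ⟨m, hmX, hm⟩ := hXinf.exists_gt (max n (s.sup id))
    set u : Finset ℕ := (Finset.range (m+1)).filter (· ∈ X) with hu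
    have humem : ∀ i, i ∈ u ↔ i ≤ m ∧ i ∈ X := by
      intro i
      simp [hu, Nat.lt_succ_iff]
    have hmu : m ∈ u := (humem m).mpr ⟨le_rfl, hmX⟩
    have hsu : (s : Set ℕ) ⊆ ↑u := by
      intro a ha
      have has : a ∈ s := by simpa using ha
      have haX : a ∈ X := hf.2.1 ha
      have : a ≤ m := le_trans (le_trans (Finset.le_sup (f := id) has) (le_max_right n _)) hm.le
      have : a ∈ u := (humem a).mpr ⟨this, haX⟩
      simpa using this
    have huX : initSeg u X := by
      constructor
      · intro a ha
        have : a ∈ u := by simpa using ha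
        exact ((humem a).mp this).2
      · intro b hb hbu a ha
        have ham : a ≤ m := ((humem a).mp ha).1
        have : ¬ (b ≤ m ∧ b ∈ X) := fun hc => hbu ((humem b).mpr hc)
        have hbm : m < b := by
          rcases Nat.lt_or_ge m b with hlt | hle
          · exact hlt
          · exact absurd ⟨hle, hb⟩ this
        omega
    have husup : n ≤ u.sup id := le_trans (le_trans (le_max_left n _) hm.le)
      (Finset.le_sup (f := id) hmu)
    have husB : (u : Set ℕ) ⊆ ↑s ∪ BB := by
      intro x hx
      have hxu : x ∈ u := by simpa using hx
      have hxX : x ∈ X := ((humem x).mp hxu).2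
      rcases hf.2.2 hxX with hh | hh
      · exact Or.inl hh
      · exact Or.inr (hCB (restr_subset s C hh))
    have hfu : f ∈ CubeIC u BB := Cube_stem (Cube_mono hCB hf) hsu huX
    rcases hdec' u husB n husup with hdecn | hdecn
    · exact hcase X hf u huX ⟨hsu, n, hdecn⟩
    · exact hdecn hfu hfn

end GP

/-- Galvin–Prikry theorem: every Borel subset of `[ω]^ω` admits a homogeneous
infinite set `H`. -/
theorem galvin_prikry (P : Set InfCantor) (hP : MeasurableSet P) :
    ∃ H : Set ℕ, H.Infinite ∧ (cube H ⊆ P ∨ cube H ⊆ Pᶜ) := by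
  have hgen : MeasurableSpace.GenerateMeasurable {U : Set InfCantor | IsOpen U} P := hP
  have hCR : GP.CR P := by
    induction hgen with
    | basic U hU => exact GP.CR_open U hU
    | empty => exact GP.CR_empty
    | compl t ht iht => exact GP.CR_compl (iht ht)
    | iUnion g hg ihg => exact GP.CR_iUnion g (fun n => ihg n (hg n))
  obtain ⟨B, _, hBinf, h3⟩ := hCR ∅ Set.univ Set.infinite_univ
  have hcube : cube B ⊆ GP.CubeIC ∅ B := by
    intro f hf
    refine ⟨f.2, by simp, ?_⟩
    intro x hx
    refine Or.inr ⟨hf x hx, ?_⟩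
    simp
  refine ⟨B, hBinf, ?_⟩
  rcases h3 with h3 | h3
  · exact Or.inl (hcube.trans h3)
  · exact Or.inr (hcube.trans h3)
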